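/- A symmetric set X is spiny (i.e., injective along some system of spines) if and only if its underlying simplicial set J^*X is edgy. -/

import Mathlib

/-- A (skeletal) simplicial set: a contravariant functor on the simplex category,
with `obj n` the set of `n`-simplices and `map α` the action of an
order-preserving map `α : [m] → [n]`. -/
structure SSet' where
  obj : ℕ → Type
  map : ∀ {m n : ℕ}, (Fin (m + 1) →o Fin (n + 1)) → obj n → obj m
  map_id : ∀ (n : ℕ) (x : obj n), map OrderHom.id x = x
  map_comp : ∀ {k m n : ℕ} (α : Fin (k + 1) →o Fin (m + 1)) (β : Fin (m + 1) →o Fin (n + 1))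
      (x : obj n), map (β.comp α) x = map α (map β x)

/-- The order-preserving map `ρ_{ij} : [1] → [n]`, `0 ↦ i`, `1 ↦ j` (for `i ≤ j`). -/
def rho {n : ℕ} (i j : Fin (n + 1)) (h : i ≤ j) : Fin 2 →o Fin (n + 1) where
  toFun := ![i, j]
  monotone' := by
    intro a b hab
    fin_cases a <;> fin_cases b <;> simp_all

/-- The `k`-th edge `ρ_{k,k+1}^*(x)` of an `n`-simplex. -/
def SSet'.edge (X : SSet') {n : ℕ} (x : X.obj n) (k : Fin n) : X.obj 1 :=
  X.map (rho k.castSucc k.succ (Fin.castSucc_lt_succ (i := k)).le) x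

/-- A simplicial set is edgy if each simplex is determined by its string of edges. -/
def SSet'.IsEdgy (X : SSet') : Prop :=
  ∀ n : ℕ, 1 ≤ n → Function.Injective fun (x : X.obj n) (k : Fin n) => X.edge x k

/-- Conjugation of an order-preserving map by the flips `τ`. -/
def conj {m n : ℕ} (α : Fin (m + 1) →o Fin (n + 1)) : Fin (m + 1) →o Fin (n + 1) where
  toFun k := (α k.rev).rev
  monotone' := by
    intro a b hab
    exact Fin.rev_le_rev.mpr (α.monotone (Fin.rev_le_rev.mpr hab))

/-- An anti-involution on a simplicial set `X`, i.e. a simplicial map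
`ν : X^op → X` with `ν^op ∘ ν = id`, described levelwise.  Naturality of
`ν : X^op → X` amounts to `ν (X(τ∘α∘τ) x) = X(α) (ν x)`. -/
structure AntiInvolution (X : SSet') where
  app : ∀ n : ℕ, X.obj n → X.obj n
  naturality : ∀ {m n : ℕ} (α : Fin (m + 1) →o Fin (n + 1)) (x : X.obj n),
    app m (X.map (conj α) x) = X.map α (app n x)
  involutive : ∀ (n : ℕ) (x : X.obj n), app n (app n x) = x

/-- The constant map `[1] → [n]` at the last vertex, i.e. `s_0 ∘ (d_0)^n`. -/
def lastConst (n : ℕ) : Fin 2 →o Fin (n + 1) := ⟨fun _ => Fin.last n, monotone_const⟩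

/-- `LSpec X ν x y` says that `y ∈ X_{2n}` has the edge string
`[f_n† | ⋯ | f_1† | f_1 | ⋯ | f_n]`, where `[f_1 | ⋯ | f_n]` is the edge string of
`x ∈ X_n`, and that the total composite `ρ_{0,2n}^*(y)` is the identity
`s_0(d_0^n x)` on the last vertex of `x`. -/
def LSpec (X : SSet') (ν : AntiInvolution X) {n : ℕ} (x : X.obj n) (y : X.obj (n + n)) : Prop :=
  (∀ k : Fin (n + n), X.edge y k =
      if h : (k : ℕ) < n then ν.app 1 (X.edge x ⟨n - 1 - (k : ℕ), by omega⟩)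
      else X.edge x ⟨(k : ℕ) - n, by have := k.isLt; omega⟩) ∧
  X.map (rho 0 (Fin.last (n + n)) (Fin.zero_le _)) y = X.map (lastConst n) x

/-- A partial groupoid structure on a simplicial set: it is edgy, has an
anti-involution which is the identity on vertices, and has operators
`L : X_n → X_{2n}` with `L[f_1|⋯|f_n] = [f_n†|⋯|f_1†|f_1|⋯|f_n]` whose total
composite is an identity. -/
structure PartialGroupoidStruct (X : SSet') where
  edgy : X.IsEdgy
  inv : AntiInvolution X
  inv_zero : ∀ x : X.obj 0, inv.app 0 x = x
  L : ∀ {n : ℕ}, X.obj n → X.obj (n + n)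
  L_spec : ∀ {n : ℕ}, 1 ≤ n → ∀ x : X.obj n, LSpec X inv x (L x)

/-- The Prop-valued version: `X` together with the anti-involution `ν` is a
partial groupoid. -/
def IsPartialGroupoid (X : SSet') (ν : AntiInvolution X) : Prop :=
  X.IsEdgy ∧ (∀ v : X.obj 0, ν.app 0 v = v) ∧
    ∀ n : ℕ, 1 ≤ n → ∀ x : X.obj n, ∃ y : X.obj (n + n), LSpec X ν x y

/-- The matrix form of an `n`-simplex: `x_{ij} = ρ_{ij}^*(x)` for `i ≤ j`, and
`x_{ji} = (x_{ij})†`. -/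
def matrixForm (X : SSet') (ν : AntiInvolution X) {n : ℕ} (x : X.obj n) (i j : Fin (n + 1)) :
    X.obj 1 :=
  if h : i ≤ j then X.map (rho i j h) x
  else ν.app 1 (X.map (rho j i (le_of_not_ge h)) x)

/-- The fold map `χ_n : [2n] → [n]`, `i ↦ |n - i|`. -/
def chi (n : ℕ) (i : Fin (n + n + 1)) : Fin (n + 1) :=
  ⟨max n (i : ℕ) - min n (i : ℕ), by have := i.isLt; omega⟩

/-- A map of simplicial sets. -/
structure SSetHom (X Y : SSet') where
  app : ∀ n : ℕ, X.obj n → Y.obj n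
  naturality : ∀ {m n : ℕ} (α : Fin (m + 1) →o Fin (n + 1)) (x : X.obj n),
    app m (X.map α x) = Y.map α (app n x)
/-- A symmetric (simplicial) set: a contravariant functor on the category `Υ`
of the sets `[n]` and arbitrary functions. -/
structure SymSet where
  obj : ℕ → Type
  map : ∀ {m n : ℕ}, (Fin (m + 1) → Fin (n + 1)) → obj n → obj m
  map_id : ∀ (n : ℕ) (x : obj n), map id x = x
  map_comp : ∀ {k m n : ℕ} (φ : Fin (k + 1) → Fin (m + 1)) (ψ : Fin (m + 1) → Fin (n + 1))
      (x : obj n), map (ψ ∘ φ) x = map φ (map ψ x)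

/-- Restriction `J^*` of a symmetric set along the inclusion `J : Δ → Υ`. -/
def SymSet.restrict (Z : SymSet) : SSet' where
  obj := Z.obj
  map α x := Z.map (⇑α) x
  map_id n x := Z.map_id n x
  map_comp α β x := Z.map_comp (⇑α) (⇑β) x

/-- A map of symmetric sets. -/
structure SymSetHom (Y Z : SymSet) where
  app : ∀ n : ℕ, Y.obj n → Z.obj n
  naturality : ∀ {m n : ℕ} (φ : Fin (m + 1) → Fin (n + 1)) (x : Y.obj n),
    app m (Y.map φ x) = Z.map φ (app n x)

/-- The identity map of symmetric sets. -/
def SymSetHom.id (X : SymSet) : SymSetHom X X where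
  app _ x := x
  naturality _ _ := rfl

/-- Composition of maps of symmetric sets. -/
def SymSetHom.comp {X Y Z : SymSet} (G : SymSetHom Y Z) (F : SymSetHom X Y) : SymSetHom X Z where
  app n x := G.app n (F.app n x)
  naturality φ x := by rw [F.naturality, G.naturality]

/-- Restriction `J^*` of a map of symmetric sets. -/
def SymSetHom.restrict {Y Z : SymSet} (G : SymSetHom Y Z) : SSetHom Y.restrict Z.restrict where
  app := G.app
  naturality α x := G.naturality (⇑α) x

/-- Injectivity of a symmetric set along a spine `T` of `[n]`: the map
`X_n → ∏_{e ∈ E(T)} X_1`, whose component at an edge `e` is the action of the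
order-preserving injection `[1] → [n]` with image `e`, is injective. -/
def SymSet.InjAlongSpine (X : SymSet) {n : ℕ} (T : SimpleGraph (Fin (n + 1))) : Prop :=
  Function.Injective fun (x : X.obj n) (e : T.edgeSet) =>
    X.map (fun k : Fin 2 => if k = 0 then Sym2.inf e.1 else Sym2.sup e.1) x

/-- A symmetric set is spiny if it is injective along some system of spines,
i.e. some choice of a spanning tree of the complete graph on `[n] = Fin (n + 1)`
for every `n ≥ 1`. -/
def SymSet.IsSpiny (X : SymSet) : Prop :=
  ∃ E : (n : ℕ) → SimpleGraph (Fin (n + 2)),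
    (∀ n, (E n).IsTree) ∧ ∀ n, X.InjAlongSpine (E n)


section Aux

open SimpleGraph

/-- The map `Fin 2 → Fin m` sending `0 ↦ i`, `1 ↦ j`. -/
def pairMap {m : ℕ} (i j : Fin m) : Fin 2 → Fin m := fun k => if k = 0 then i else j

lemma pairMap_comp {m l : ℕ} (f : Fin l → Fin m) (a b : Fin l) :
    f ∘ pairMap a b = pairMap (f a) (f b) := by
  funext k
  by_cases h : k = 0 <;> simp [pairMap, h]

lemma crossing {N : ℕ} {kf kf' : Fin N} (hsucc : (kf : ℕ) + 1 = (kf' : ℕ)) :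
    ∀ {a b : Fin N} (p : (pathGraph N).Walk a b),
      (a : ℕ) ≤ (kf : ℕ) → (kf : ℕ) < (b : ℕ) → s(kf, kf') ∈ p.edges := by
  intro a b p
  induction p with
  | nil => intro h1 h2; omega
  | @cons u c b hadj q ih =>
    intro h1 h2
    rw [SimpleGraph.Walk.edges_cons, List.mem_cons]
    by_cases hc : (c : ℕ) ≤ (kf : ℕ)
    · exact Or.inr (ih hc h2)
    · refine Or.inl ?_
      have hadj' := SimpleGraph.pathGraph_adj.mp hadj
      have hu : u = kf := Fin.ext (by omega)
      have hcv : c = kf' := Fin.ext (by omega)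
      rw [hu, hcv]

lemma pathGraph_isAcyclic (N : ℕ) : (pathGraph N).IsAcyclic := by
  rw [SimpleGraph.isAcyclic_iff_forall_adj_isBridge]
  intro v w hadj
  rcases SimpleGraph.pathGraph_adj.mp hadj with h | h
  · rw [SimpleGraph.isBridge_iff_adj_and_forall_walk_mem_edges]
    exact fun p => crossing h p le_rfl (by omega)
  · rw [Sym2.eq_swap, SimpleGraph.isBridge_iff_adj_and_forall_walk_mem_edges]
    exact fun p => crossing h p le_rfl (by omega)

lemma pathGraph_isTree (N : ℕ) : (pathGraph (N + 1)).IsTree :=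
  ⟨SimpleGraph.pathGraph_connected N, pathGraph_isAcyclic (N + 1)⟩

lemma tree3_nonadj (T : SimpleGraph (Fin 3)) (hT : T.IsTree) :
    ∃ a b : Fin 3, a ≠ b ∧ ¬T.Adj a b := by
  classical
  by_contra hc
  push_neg at hc
  have hcard := hT.card_edgeFinset
  rw [Fintype.card_fin] at hcard
  have hsub : ({s(0, 1), s(0, 2), s(1, 2)} : Finset (Sym2 (Fin 3))) ⊆ T.edgeFinset := by
    intro e he
    simp only [Finset.mem_insert, Finset.mem_singleton] at he
    rcases he with rfl | rfl | rfl <;>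
      exact SimpleGraph.mem_edgeFinset.mpr (hc _ _ (by decide))
  have h3 : ({s(0, 1), s(0, 2), s(1, 2)} : Finset (Sym2 (Fin 3))).card = 3 := by decide
  have hle := Finset.card_le_card hsub
  omega

end Aux

lemma adj_inf_sup {V : Type*} [LinearOrder V] {G : SimpleGraph V} {e : Sym2 V}
    (he : e ∈ G.edgeSet) : G.Adj e.inf e.sup := by
  induction e using Sym2.ind with
  | _ u v =>
    rw [SimpleGraph.mem_edgeSet] at he
    rcases le_total u v with h | h
    · simpa [Sym2.inf_mk, Sym2.sup_mk, inf_eq_left.mpr h, sup_eq_right.mpr h] using he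
    · simpa [Sym2.inf_mk, Sym2.sup_mk, inf_eq_right.mpr h, sup_eq_left.mpr h] using he.symm

lemma key (X : SymSet) (T2 : SimpleGraph (Fin 3)) (hT2 : T2.IsTree)
    (hinj2 : X.InjAlongSpine T2) {N : ℕ} (x y : X.obj (N + 1))
    (h : ∀ k : Fin (N + 1),
      X.map (pairMap k.castSucc k.succ) x = X.map (pairMap k.castSucc k.succ) y) :
    ∀ d : ℕ, ∀ i j : Fin (N + 2), (i : ℕ) ≤ (j : ℕ) → (j : ℕ) - (i : ℕ) = d →
      X.map (pairMap i j) x = X.map (pairMap i j) y := by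
  intro d
  induction d using Nat.strong_induction_on with
  | _ d IH =>
  intro i j hij hd
  have IH' : ∀ p q : Fin (N + 2), max (p : ℕ) (q : ℕ) - min (p : ℕ) (q : ℕ) < d →
      X.map (pairMap p q) x = X.map (pairMap p q) y := by
    intro p q hpq
    rcases le_total (p : ℕ) (q : ℕ) with hle | hle
    · exact IH ((q : ℕ) - (p : ℕ)) (by omega) p q hle rfl
    · have h1 : pairMap p q = pairMap q p ∘ pairMap (1 : Fin 2) 0 := by
        rw [pairMap_comp]
        simp [pairMap]
      rw [h1, X.map_comp, X.map_comp, IH ((p : ℕ) - (q : ℕ)) (by omega) q p hle rfl]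
  match d, hd with
  | 0, hd =>
    have hji : i = j := Fin.ext (by omega)
    subst hji
    by_cases hn : (i : ℕ) < N + 1
    · have hk : (⟨(i : ℕ), hn⟩ : Fin (N + 1)).castSucc = i := Fin.ext rfl
      have h1 : pairMap i i =
          pairMap (⟨(i : ℕ), hn⟩ : Fin (N + 1)).castSucc (⟨(i : ℕ), hn⟩ : Fin (N + 1)).succ ∘
            pairMap (0 : Fin 2) 0 := by
        rw [pairMap_comp]
        simp [pairMap, hk]
      rw [h1, X.map_comp, X.map_comp, h ⟨(i : ℕ), hn⟩]
    · have hi1 : 1 ≤ (i : ℕ) := by have := i.isLt; omega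
      have hn' : (i : ℕ) - 1 < N + 1 := by have := i.isLt; omega
      have hk : (⟨(i : ℕ) - 1, hn'⟩ : Fin (N + 1)).succ = i := Fin.ext (by simp; omega)
      have h1 : pairMap i i =
          pairMap (⟨(i : ℕ) - 1, hn'⟩ : Fin (N + 1)).castSucc
              (⟨(i : ℕ) - 1, hn'⟩ : Fin (N + 1)).succ ∘ pairMap (1 : Fin 2) 1 := by
        rw [pairMap_comp]
        simp [pairMap, hk]
      rw [h1, X.map_comp, X.map_comp, h ⟨(i : ℕ) - 1, hn'⟩]
  | 1, hd =>
    have hn : (i : ℕ) < N + 1 := by have := j.isLt; omega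
    have hc : (⟨(i : ℕ), hn⟩ : Fin (N + 1)).castSucc = i := Fin.ext rfl
    have hs : (⟨(i : ℕ), hn⟩ : Fin (N + 1)).succ = j := Fin.ext (by simp; omega)
    have := h ⟨(i : ℕ), hn⟩
    rwa [hc, hs] at this
  | (d1 + 2), hd =>
    obtain ⟨a, b, hab, hnadj⟩ := tree3_nonadj T2 hT2
    have hj1 : 1 ≤ (j : ℕ) := by omega
    set mid : Fin (N + 2) := ⟨(j : ℕ) - 1, by have := j.isLt; omega⟩ with hmid
    set φ : Fin 3 → Fin (N + 2) := fun v => if v = a then i else if v = b then j else mid with hφ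
    have hφa : φ a = i := by simp [hφ]
    have hφb : φ b = j := by simp [hφ, Ne.symm hab]
    have hrange : ∀ w : Fin 3,
        ((φ w : ℕ) = (i : ℕ) ∨ (φ w : ℕ) = (j : ℕ) - 1 ∨ (φ w : ℕ) = (j : ℕ)) ∧
          ((φ w : ℕ) = (i : ℕ) → w = a) ∧ ((φ w : ℕ) = (j : ℕ) → w = b) := by
      intro w
      by_cases h1 : w = a
      · subst h1
        refine ⟨Or.inl (by rw [hφa]), fun _ => rfl, fun hw => ?_⟩
        rw [hφa] at hw; omega
      · by_cases h2 : w = b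
        · subst h2
          refine ⟨Or.inr (Or.inr (by rw [hφb])), fun hw => ?_, fun _ => rfl⟩
          rw [hφb] at hw; omega
        · have hw : φ w = mid := by simp [hφ, h1, h2]
          refine ⟨Or.inr (Or.inl (by rw [hw])), fun hc => ?_, fun hc => ?_⟩ <;>
            (rw [hw] at hc; simp [hmid] at hc; omega)
    have hgap : ∀ u v : Fin 3, T2.Adj u v →
        X.map (pairMap (φ u) (φ v)) x = X.map (pairMap (φ u) (φ v)) y := by
      intro u v huv
      apply IH'
      have h1 := hrange u
      have h2 := hrange v
      by_cases hcase : ((φ u : ℕ) = (i : ℕ) ∧ (φ v : ℕ) = (j : ℕ)) ∨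
          ((φ u : ℕ) = (j : ℕ) ∧ (φ v : ℕ) = (i : ℕ))
      · exfalso
        rcases hcase with ⟨hu, hv⟩ | ⟨hu, hv⟩
        · rw [h1.2.1 hu, h2.2.2 hv] at huv
          exact hnadj huv
        · rw [h1.2.2 hu, h2.2.1 hv] at huv
          exact hnadj huv.symm
      · push_neg at hcase
        rcases h1.1 with hu | hu | hu <;> rcases h2.1 with hv | hv | hv <;> omega
    have hmain : X.map φ x = X.map φ y := by
      apply hinj2
      funext e
      show X.map (pairMap (Sym2.inf e.1) (Sym2.sup e.1)) (X.map φ x)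
         = X.map (pairMap (Sym2.inf e.1) (Sym2.sup e.1)) (X.map φ y)
      rw [← X.map_comp, ← X.map_comp, pairMap_comp]
      exact hgap _ _ (adj_inf_sup e.2)
    have hfinal : pairMap i j = φ ∘ pairMap a b := by
      rw [pairMap_comp, hφa, hφb]
    rw [hfinal, X.map_comp, X.map_comp, hmain]

lemma rho_coe {n : ℕ} (i j : Fin (n + 1)) (hij : i ≤ j) :
    ⇑(rho i j hij) = pairMap i j := by
  funext l
  fin_cases l <;> rfl

/-- A symmetric set `X` is spiny (injective along some system
of spines) if and only if its underlying simplicial set `J^*X` is edgy. -/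
theorem spiny_iff_edgy (X : SymSet) : X.IsSpiny ↔ X.restrict.IsEdgy := by
  constructor
  · rintro ⟨E, hT, hinj⟩ n hn x y hxy
    obtain ⟨N, rfl⟩ : ∃ N, n = N + 1 := ⟨n - 1, by omega⟩
    have hedge : ∀ k : Fin (N + 1),
        X.map (pairMap k.castSucc k.succ) x = X.map (pairMap k.castSucc k.succ) y := by
      intro k
      have h := congrFun hxy k
      simpa [SSet'.edge, SymSet.restrict, rho_coe] using h
    apply hinj N
    funext e
    show X.map (pairMap (Sym2.inf e.1) (Sym2.sup e.1)) x
       = X.map (pairMap (Sym2.inf e.1) (Sym2.sup e.1)) y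
    exact key X (E 1) (hT 1) (hinj 1) x y hedge
      (((Sym2.sup e.1 : Fin (N + 2)) : ℕ) - ((Sym2.inf e.1 : Fin (N + 2)) : ℕ))
      (Sym2.inf e.1) (Sym2.sup e.1) (Fin.le_def.mp (Sym2.inf_le_sup e.1)) rfl
  · intro hedgy
    refine ⟨fun n => SimpleGraph.pathGraph (n + 2), fun n => pathGraph_isTree (n + 1),
      fun n x y hxy => ?_⟩
    apply hedgy (n + 1) (by omega)
    funext k
    have hadj : (SimpleGraph.pathGraph (n + 2)).Adj k.castSucc k.succ :=
      SimpleGraph.pathGraph_adj.mpr (Or.inl (by simp))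
    have h := congrFun hxy ⟨s(k.castSucc, k.succ), hadj⟩
    have hinf : Sym2.inf s(k.castSucc, k.succ) = k.castSucc := by
      rw [Sym2.inf_mk]
      exact inf_eq_left.mpr (Fin.castSucc_lt_succ (i := k)).le
    have hsup : Sym2.sup s(k.castSucc, k.succ) = k.succ := by
      rw [Sym2.sup_mk]
      exact sup_eq_right.mpr (Fin.castSucc_lt_succ (i := k)).le
    show X.restrict.edge x k = X.restrict.edge y k
    simp only [hinf, hsup] at h
    simp only [SSet'.edge, SymSet.restrict]
    rw [rho_coe]
    exact h
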